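/- arXiv:2405.07214 — 3 statements merged into one kernel-verified Lean document; each statement's English description precedes it below -/
import Mathlib

section
/- Let f : B_1 → ℝ be measurable with f ∈ L^1(B_1), and suppose ⨍_{B_r} |f - f_{B_r}| ≤ K r^α for all 0 < r < 1, where f_{B_r} = ⨍_{B_r} f, K > 0, and 0 < α < 1. Then there exists a constant a_0 such that ⨍_{B_r} |f - a_0| ≤ C K r^α for all 0 < r < 1, where C depends only on n and α. -/
open MeasureTheory Metric

noncomputable section

abbrev Euc (n : ℕ) := EuclideanSpace ℝ (Fin n)

lemma euc_vol_ball (n : ℕ) {r : ℝ} (hr : 0 < r) :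
    (volume (ball (0 : Euc n) r)).toReal = r ^ n * (volume (ball (0 : Euc n) 1)).toReal := by
  rw [Measure.addHaar_ball_of_pos volume (0 : Euc n) hr,
    ENNReal.toReal_mul, ENNReal.toReal_ofReal (by positivity)]
  simp [finrank_euclideanSpace_fin]

lemma euc_vol_pos (n : ℕ) {r : ℝ} (hr : 0 < r) :
    0 < (volume (ball (0 : Euc n) r)).toReal :=
  ENNReal.toReal_pos (measure_ball_pos volume _ hr).ne' measure_ball_lt_top.ne

/-- average of a nonneg function over a smaller ball is controlled by ratio^n times
average over larger ball -/
lemma avg_ratio (n : ℕ) (g : Euc n → ℝ) {s t : ℝ} (hs : 0 < s) (hst : s ≤ t)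
    (hg : IntegrableOn g (ball (0 : Euc n) t)) (hg0 : ∀ x, 0 ≤ g x) :
    ⨍ x in ball (0 : Euc n) s, g x ≤ (t / s) ^ n * ⨍ x in ball (0 : Euc n) t, g x := by
  have ht : 0 < t := hs.trans_le hst
  set c := (volume (ball (0 : Euc n) 1)).toReal with hc
  have hcpos : 0 < c := euc_vol_pos n one_pos
  have hI : ∫ x in ball (0 : Euc n) s, g x ≤ ∫ x in ball (0 : Euc n) t, g x :=
    setIntegral_mono_set hg (ae_of_all _ hg0) ((ball_subset_ball hst).eventuallyLE)
  rw [setAverage_eq, setAverage_eq, measureReal_def, measureReal_def, euc_vol_ball n hs, euc_vol_ball n ht,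
    smul_eq_mul, smul_eq_mul]
  have he : (t / s) ^ n * ((t ^ n * c)⁻¹ * ∫ x in ball (0 : Euc n) t, g x)
      = (s ^ n * c)⁻¹ * ∫ x in ball (0 : Euc n) t, g x := by
    field_simp
    rw [mul_right_comm, ← mul_pow, div_mul_cancel₀ t hs.ne']
  rw [he]
  exact mul_le_mul_of_nonneg_left hI (by positivity)

/-- distance of average to a constant is at most average of distance -/
lemma avg_dist (n : ℕ) (f : Euc n → ℝ) {s : ℝ} (hs : 0 < s)
    (hf : IntegrableOn f (ball (0 : Euc n) s)) (b : ℝ) :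
    |(⨍ x in ball (0 : Euc n) s, f x) - b| ≤ ⨍ x in ball (0 : Euc n) s, |f x - b| := by
  set B := ball (0 : Euc n) s
  have hw : 0 < (volume B).toReal := euc_vol_pos n hs
  have hconst : IntegrableOn (fun _ : Euc n => b) B :=
    integrableOn_const measure_ball_lt_top.ne
  have h1 : (⨍ x in B, f x) - b = (volume B).toReal⁻¹ * ∫ x in B, (f x - b) := by
    rw [integral_sub hf hconst, setIntegral_const, smul_eq_mul, setAverage_eq, smul_eq_mul]
    simp only [measureReal_def]
    field_simp
  rw [h1, setAverage_eq, smul_eq_mul, abs_mul, abs_of_nonneg (by positivity)]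
  refine mul_le_mul_of_nonneg_left ?_ (by positivity)
  calc |∫ x in B, (f x - b)| ≤ ∫ x in B, |f x - b| := by
        simpa [Real.norm_eq_abs] using
          norm_integral_le_integral_norm (μ := volume.restrict B) (f := fun x => f x - b)
    _ = ∫ x in B, |f x - b| := rfl

lemma avg_triangle (n : ℕ) (f : Euc n → ℝ) {s : ℝ} (hs : 0 < s)
    (hf : IntegrableOn f (ball (0 : Euc n) s)) (a b : ℝ) :
    ⨍ x in ball (0 : Euc n) s, |f x - b|
      ≤ (⨍ x in ball (0 : Euc n) s, |f x - a|) + |a - b| := by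
  set B := ball (0 : Euc n) s
  have hw : 0 < (volume B).toReal := euc_vol_pos n hs
  have hconst : ∀ c : ℝ, IntegrableOn (fun _ : Euc n => c) B := fun c =>
    integrableOn_const measure_ball_lt_top.ne
  have hia : IntegrableOn (fun x => |f x - a|) B := (hf.sub (hconst a)).abs
  have hib : IntegrableOn (fun x => |f x - b|) B := (hf.sub (hconst b)).abs
  have hI : ∫ x in B, |f x - b| ≤ ∫ x in B, (|f x - a| + |a - b|) := by
    refine setIntegral_mono_on hib (hia.add (hconst _)) measurableSet_ball ?_
    intro x _
    have := abs_sub_le (f x) a b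
    linarith [abs_sub_le (f x) a b]
  have h2 : ∫ x in B, (|f x - a| + |a - b|)
      = (∫ x in B, |f x - a|) + (volume B).toReal * |a - b| := by
    rw [integral_add hia (hconst _), setIntegral_const, smul_eq_mul, measureReal_def]
  rw [setAverage_eq, setAverage_eq, smul_eq_mul, smul_eq_mul]
  calc (volume B).toReal⁻¹ * ∫ x in B, |f x - b|
      ≤ (volume B).toReal⁻¹ * ((∫ x in B, |f x - a|) + (volume B).toReal * |a - b|) := by
        rw [← h2]; exact mul_le_mul_of_nonneg_left hI (by positivity)
    _ = (volume B).toReal⁻¹ * (∫ x in B, |f x - a|) + |a - b| := by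
        field_simp

/-- If `f ∈ L¹(B₁)` and `⨍_{B_r}|f - f_{B_r}| ≤ K r^α` for all `0 < r < 1`, then there exists
a constant `a₀` with `⨍_{B_r}|f - a₀| ≤ C K r^α` for all `0 < r < 1`, where `C = C(n,α)`. -/
theorem pointwise_Calpha_of_oscillation_decay (n : ℕ) (α : ℝ) (hα0 : 0 < α) (hα1 : α < 1) :
    ∃ C > 0, ∀ f : Euc n → ℝ, IntegrableOn f (ball (0 : Euc n) 1) →
      ∀ K : ℝ, 0 < K →
      (∀ r : ℝ, 0 < r → r < 1 →
        (⨍ x in ball (0 : Euc n) r, |f x - ⨍ y in ball (0 : Euc n) r, f y|) ≤ K * r ^ α) →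
      ∃ a₀ : ℝ, ∀ r : ℝ, 0 < r → r < 1 →
        (⨍ x in ball (0 : Euc n) r, |f x - a₀|) ≤ C * K * r ^ α := by
  classical
  set ρ : ℝ := (2:ℝ)⁻¹ ^ α with hρ
  have hρ0 : 0 < ρ := Real.rpow_pos_of_pos (by norm_num) α
  have hρ1 : ρ < 1 := Real.rpow_lt_one (by norm_num) (by norm_num) hα0
  have h1ρ : 0 < 1 - ρ := by linarith
  set D : ℝ := (2:ℝ) ^ n with hD
  have hDpos : 0 < D := by positivity
  refine ⟨1 + D + D / (1 - ρ), by positivity, ?_⟩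
  intro f hf K hK hosc
  have hfr : ∀ {r : ℝ}, r ≤ 1 → IntegrableOn f (ball (0 : Euc n) r) :=
    fun hr => hf.mono_set (ball_subset_ball hr)
  have habs : ∀ (b : ℝ) {r : ℝ}, 0 < r → r ≤ 1 →
      IntegrableOn (fun x => |f x - b|) (ball (0 : Euc n) r) := by
    intro b r hr0 hr1
    exact ((hfr hr1).sub (integrableOn_const measure_ball_lt_top.ne)).abs
  -- powers
  have hspos : ∀ k : ℕ, (0:ℝ) < (2:ℝ)⁻¹ ^ k := fun k => by positivity
  have hslt1 : ∀ k : ℕ, ((2:ℝ)⁻¹) ^ (k+1) < 1 := fun k =>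
    pow_lt_one₀ (by norm_num) (by norm_num) (Nat.succ_ne_zero k)
  have hpow : ∀ k : ℕ, (((2:ℝ)⁻¹) ^ k) ^ α = ρ ^ k := by
    intro k
    rw [← Real.rpow_natCast (2:ℝ)⁻¹ k, ← Real.rpow_mul (by norm_num : (0:ℝ) ≤ 2⁻¹),
      mul_comm, Real.rpow_mul (by norm_num : (0:ℝ) ≤ 2⁻¹), Real.rpow_natCast]
  -- the sequence of averages
  set a : ℕ → ℝ := fun m => ⨍ x in ball (0 : Euc n) ((2:ℝ)⁻¹ ^ (m+1)), f x with ha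
  have key : ∀ m : ℕ, dist (a m) (a (m+1)) ≤ (D * K * ρ) * ρ ^ m := by
    intro m
    rw [dist_comm, Real.dist_eq]
    have h1 : |a (m+1) - a m| ≤ ⨍ x in ball (0 : Euc n) ((2:ℝ)⁻¹ ^ (m+2)), |f x - a m| :=
      avg_dist n f (hspos (m+2)) (hfr (hslt1 (m+1)).le) (a m)
    have hratio : ((2:ℝ)⁻¹ ^ (m+1)) / ((2:ℝ)⁻¹ ^ (m+2)) = 2 := by
      rw [pow_succ]; field_simp; ring
    have h2 : ⨍ x in ball (0 : Euc n) ((2:ℝ)⁻¹ ^ (m+2)), |f x - a m|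
        ≤ (((2:ℝ)⁻¹ ^ (m+1)) / ((2:ℝ)⁻¹ ^ (m+2))) ^ n
          * ⨍ x in ball (0 : Euc n) ((2:ℝ)⁻¹ ^ (m+1)), |f x - a m| := by
      refine avg_ratio n _ (hspos (m+2)) ?_ (habs (a m) (hspos (m+1)) (hslt1 m).le)
        (fun x => abs_nonneg _)
      exact pow_le_pow_of_le_one (by norm_num) (by norm_num) (by omega)
    have h3 : ⨍ x in ball (0 : Euc n) ((2:ℝ)⁻¹ ^ (m+1)), |f x - a m|
        ≤ K * ((2:ℝ)⁻¹ ^ (m+1)) ^ α := hosc _ (hspos (m+1)) (hslt1 m)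
    have h4 : (((2:ℝ)⁻¹ ^ (m+1)) / ((2:ℝ)⁻¹ ^ (m+2))) ^ n = D := by rw [hratio]
    calc |a (m+1) - a m| ≤ ⨍ x in ball (0 : Euc n) ((2:ℝ)⁻¹ ^ (m+2)), |f x - a m| := h1
      _ ≤ (((2:ℝ)⁻¹ ^ (m+1)) / ((2:ℝ)⁻¹ ^ (m+2))) ^ n
          * ⨍ x in ball (0 : Euc n) ((2:ℝ)⁻¹ ^ (m+1)), |f x - a m| := h2
      _ ≤ D * (K * ((2:ℝ)⁻¹ ^ (m+1)) ^ α) := by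
          rw [h4]
          exact mul_le_mul_of_nonneg_left h3 hDpos.le
      _ = (D * K * ρ) * ρ ^ m := by rw [hpow (m+1), pow_succ]; ring
  have hcauchy : CauchySeq a := cauchySeq_of_le_geometric ρ (D * K * ρ) hρ1 key
  obtain ⟨a₀, ha₀⟩ := cauchySeq_tendsto_of_complete hcauchy
  have hlim : ∀ m : ℕ, dist (a m) a₀ ≤ (D * K * ρ) * ρ ^ m / (1 - ρ) :=
    fun m => dist_le_of_le_geometric_of_tendsto ρ (D * K * ρ) hρ1 key ha₀ m
  refine ⟨a₀, ?_⟩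
  intro r hr0 hr1
  -- choose the dyadic scale
  have hex : ∃ k : ℕ, ((2:ℝ)⁻¹) ^ (k+1) ≤ r := by
    obtain ⟨k, hk⟩ := exists_pow_lt_of_lt_one hr0 (by norm_num : (2:ℝ)⁻¹ < 1)
    exact ⟨k, le_of_lt (lt_of_le_of_lt (pow_le_pow_of_le_one (by norm_num)
      (by norm_num) (by omega)) hk)⟩
  set m := Nat.find hex with hm
  have hsle : ((2:ℝ)⁻¹) ^ (m+1) ≤ r := Nat.find_spec hex
  have hrlt : r < ((2:ℝ)⁻¹) ^ m := by
    rcases Nat.eq_zero_or_pos m with h0 | hpos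
    · rw [h0]; simpa using hr1
    · have hk : m - 1 < m := by omega
      have hmin := Nat.find_min hex hk
      have hme : m - 1 + 1 = m := by omega
      rw [hme] at hmin
      exact lt_of_not_ge hmin
  set s : ℝ := ((2:ℝ)⁻¹) ^ (m+1) with hsdef
  have hs0 : 0 < s := hspos (m+1)
  set ar : ℝ := ⨍ x in ball (0 : Euc n) r, f x with har
  have hosc_r : ⨍ x in ball (0 : Euc n) r, |f x - ar| ≤ K * r ^ α := hosc r hr0 hr1
  -- |a m - ar|
  have hrs : r / s < 2 := by
    rw [div_lt_iff₀ hs0]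
    calc r < ((2:ℝ)⁻¹) ^ m := hrlt
      _ = 2 * s := by rw [hsdef, pow_succ]; ring
  have ham_ar : |a m - ar| ≤ D * (K * r ^ α) := by
    have h1 : |a m - ar| ≤ ⨍ x in ball (0 : Euc n) s, |f x - ar| :=
      avg_dist n f hs0 (hfr (hslt1 m).le) ar
    have h2 : ⨍ x in ball (0 : Euc n) s, |f x - ar|
        ≤ (r / s) ^ n * ⨍ x in ball (0 : Euc n) r, |f x - ar| :=
      avg_ratio n _ hs0 hsle (habs ar hr0 hr1.le) (fun x => abs_nonneg _)
    have h3 : (r / s) ^ n ≤ D := by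
      rw [hD]
      exact pow_le_pow_left₀ (by positivity) hrs.le n
    have havg_nonneg : 0 ≤ ⨍ x in ball (0 : Euc n) r, |f x - ar| := by
      rw [setAverage_eq, smul_eq_mul]
      have : 0 ≤ ∫ x in ball (0 : Euc n) r, |f x - ar| :=
        setIntegral_nonneg measurableSet_ball (fun x _ => abs_nonneg _)
      positivity
    calc |a m - ar| ≤ ⨍ x in ball (0 : Euc n) s, |f x - ar| := h1
      _ ≤ (r / s) ^ n * ⨍ x in ball (0 : Euc n) r, |f x - ar| := h2
      _ ≤ D * (K * r ^ α) := by
          exact mul_le_mul h3 hosc_r havg_nonneg hDpos.le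
  -- |a m - a₀|
  have hsa : s ^ α ≤ r ^ α := Real.rpow_le_rpow hs0.le hsle hα0.le
  have ham_a0 : |a m - a₀| ≤ D * (K * r ^ α) / (1 - ρ) := by
    have h1 : |a m - a₀| ≤ (D * K * ρ) * ρ ^ m / (1 - ρ) := by
      rw [← Real.dist_eq]; exact hlim m
    have h2 : (D * K * ρ) * ρ ^ m = D * (K * s ^ α) := by
      rw [hsdef, hpow (m+1), pow_succ]; ring
    calc |a m - a₀| ≤ (D * K * ρ) * ρ ^ m / (1 - ρ) := h1
      _ = D * (K * s ^ α) / (1 - ρ) := by rw [h2]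
      _ ≤ D * (K * r ^ α) / (1 - ρ) := by gcongr
  -- combine
  have htri : ⨍ x in ball (0 : Euc n) r, |f x - a₀|
      ≤ (⨍ x in ball (0 : Euc n) r, |f x - ar|) + |ar - a₀| :=
    avg_triangle n f hr0 (hfr hr1.le) ar a₀
  have htri2 : |ar - a₀| ≤ |a m - ar| + |a m - a₀| := by
    have := abs_sub_le ar (a m) a₀
    rw [abs_sub_comm ar (a m)] at this
    linarith
  have hfinal : D * (K * r ^ α) / (1 - ρ) = (D / (1 - ρ)) * (K * r ^ α) := by
    field_simp
  have hT : 0 < K * r ^ α := by positivity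
  calc ⨍ x in ball (0 : Euc n) r, |f x - a₀|
      ≤ (⨍ x in ball (0 : Euc n) r, |f x - ar|) + |ar - a₀| := htri
    _ ≤ K * r ^ α + (D * (K * r ^ α) + D * (K * r ^ α) / (1 - ρ)) := by
        have := htri2
        linarith [hosc_r, ham_ar, ham_a0]
    _ = (1 + D + D / (1 - ρ)) * K * r ^ α := by
        rw [hfinal]; ring
end
end

section
/- Let f ∈ L^∞(B_1), k ≥ 0, 0 < α ≤ 1, and suppose there is a constant K such that for every x_0 ∈ B_1 there exists a polynomial P_{x_0} of degree ≤ k with sup_{B_r(x_0) ∩ B_1} |f - P_{x_0}| ≤ K r^{k+α} for all 0 < r < 1. Then for any x_0, x ∈ B_1 with r = |x - x_0| < 1/4, one has Σ_{i=0}^{k} r^i sup_{B_r(x_0) ∩ B_1} |D^i P_x - D^i P_{x_0}| ≤ C K r^{k+α}, where C depends only on n and k. -/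
open MeasureTheory Metric

noncomputable section

/-- `P` is (the function given by) a polynomial on `ℝ^n` of total degree at most `k`. -/
def IsPolyDeg (n k : ℕ) (P : Euc n → ℝ) : Prop :=
  ∃ q : MvPolynomial (Fin n) ℝ, q.totalDegree ≤ k ∧ ∀ x : Euc n, P x = MvPolynomial.eval (fun i => x i) q

open MvPolynomial

def expD (n k : ℕ) : Finset (Fin n →₀ ℕ) := Finset.Iic (Finsupp.equivFunOnFinite.symm fun _ => k)

lemma mem_expD {n k : ℕ} {d : Fin n →₀ ℕ} (h : d.sum (fun _ e => e) ≤ k) : d ∈ expD n k := by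
  simp only [expD, Finset.mem_Iic, Finsupp.le_def]
  intro i
  have hrhs : (Finsupp.equivFunOnFinite.symm fun _ => k) i = k := rfl
  rw [hrhs]
  refine le_trans ?_ h
  by_cases hi : d i = 0
  · simp [hi]
  · exact Finset.single_le_sum (f := fun j => d j) (fun _ _ => Nat.zero_le _)
      (Finsupp.mem_support_iff.2 hi)

def mon (n : ℕ) (d : Fin n →₀ ℕ) : Euc n → ℝ := fun x => ∏ i, x i ^ d i

def eP (n k : ℕ) (c : ↥(expD n k) → ℝ) : Euc n → ℝ :=
  fun x => ∑ d ∈ (expD n k).attach, c d * mon n d x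

lemma contDiff_finset_prod {n : ℕ} {ι : Type*} (s : Finset ι) (f : ι → Euc n → ℝ)
    (h : ∀ i, ContDiff ℝ (⊤:ℕ∞) (f i)) : ContDiff ℝ (⊤:ℕ∞) (fun x => ∏ i ∈ s, f i x) := by
  classical
  induction s using Finset.cons_induction with
  | empty => simpa using contDiff_const
  | cons a s ha ih => simpa only [Finset.prod_cons] using (h a).mul ih

lemma contDiff_mon {n : ℕ} (d : Fin n →₀ ℕ) : ContDiff ℝ (⊤:ℕ∞) (mon n d) :=
  contDiff_finset_prod _ _ fun i => ((EuclideanSpace.proj i : Euc n →L[ℝ] ℝ).contDiff).pow _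

lemma contDiff_eP {n k : ℕ} (c : ↥(expD n k) → ℝ) : ContDiff ℝ (⊤:ℕ∞) (eP n k c) :=
  ContDiff.sum fun d _ => (contDiff_const (c := c d)).mul (contDiff_mon d.1)

lemma rep_of_isPolyDeg {n k : ℕ} {F : Euc n → ℝ} (h : IsPolyDeg n k F) :
    ∃ c : ↥(expD n k) → ℝ, F = eP n k c := by
  obtain ⟨q, hq, hFq⟩ := h
  refine ⟨fun d => q.coeff d.1, funext fun x => ?_⟩
  rw [hFq, eval_eq']
  rw [eP, Finset.sum_attach (expD n k) (fun d => q.coeff d * mon n d x)]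
  simp only [mon]
  refine Finset.sum_subset (fun d hd => mem_expD (le_trans (le_totalDegree hd) hq))
    (fun d _ hd => ?_)
  simp [MvPolynomial.notMem_support_iff.1 hd]

lemma mvpoly_zero_of_vanish {n : ℕ} (q : MvPolynomial (Fin n) ℝ)
    (h : ∀ x : Euc n, ‖x‖ ≤ 1/2 → eval (fun i => x i) q = 0) : q = 0 := by
  refine MvPolynomial.funext fun v => ?_
  rw [map_zero]
  set w : Euc n := (WithLp.equiv 2 (Fin n → ℝ)).symm v with hw
  have hwv : ∀ i, w i = v i := fun i => rfl
  set u : Polynomial ℝ :=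
    MvPolynomial.eval₂ Polynomial.C (fun i => Polynomial.C (v i) * Polynomial.X) q with hu
  have key : ∀ t : ℝ, Polynomial.eval t u = eval (fun i => v i * t) q := by
    intro t
    have h1 := MvPolynomial.eval₂_comp_left (Polynomial.evalRingHom t) Polynomial.C
      (fun i => Polynomial.C (v i) * Polynomial.X) q
    have h2 : (Polynomial.evalRingHom t).comp Polynomial.C = RingHom.id ℝ := by
      ext a; simp
    have h3 : ((Polynomial.evalRingHom t) ∘ fun i => Polynomial.C (v i) * Polynomial.X)
        = fun i => v i * t := by
      funext i; simp
    rw [hu] at *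
    calc Polynomial.eval t (MvPolynomial.eval₂ Polynomial.C
          (fun i => Polynomial.C (v i) * Polynomial.X) q)
        = MvPolynomial.eval₂ (RingHom.id ℝ) (fun i => v i * t) q := by
          rw [show (Polynomial.eval t (MvPolynomial.eval₂ Polynomial.C
            (fun i => Polynomial.C (v i) * Polynomial.X) q)) = Polynomial.evalRingHom t
            (MvPolynomial.eval₂ Polynomial.C (fun i => Polynomial.C (v i) * Polynomial.X) q)
            from rfl, h1, h2, h3]
      _ = eval (fun i => v i * t) q := rfl
  set δ : ℝ := 1 / (2 * (‖w‖ + 1)) with hδ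
  have hδpos : 0 < δ := by positivity
  have hroots : Set.Ioo (0:ℝ) δ ⊆ {t | u.IsRoot t} := by
    intro t ht
    have ht0 : 0 < t := ht.1
    have htδ : t < δ := ht.2
    have hb : ‖t • w‖ ≤ 1/2 := by
      rw [norm_smul]
      have h4 : ‖t‖ = t := abs_of_pos ht0
      have h5 : ‖w‖ ≥ 0 := norm_nonneg w
      rw [h4]
      rw [hδ] at htδ
      have h6 : t * (2 * (‖w‖ + 1)) < 1 := by
        rw [← lt_div_iff₀ (by positivity)]
        exact htδ
      nlinarith
    have h6 := h (t • w) hb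
    have h7 : (fun i => (t • w) i) = fun i => v i * t := by
      funext i
      have : (t • w) i = t * w i := rfl
      rw [this, hwv, mul_comm]
    rw [h7] at h6
    simpa [Polynomial.IsRoot, key t] using h6
  have hu0 : u = 0 :=
    Polynomial.eq_zero_of_infinite_isRoot u (((Set.Ioo_infinite hδpos).mono hroots))
  have := key 1
  rw [hu0] at this
  simp only [Polynomial.eval_zero] at this
  have h9 : (fun i => v i * 1) = v := funext fun i => mul_one _
  rw [h9] at this
  exact this.symm

lemma eP_eq_eval {n k : ℕ} (c : ↥(expD n k) → ℝ) (x : Euc n) :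
    eP n k c x = eval (fun i => x i)
      (∑ d ∈ (expD n k).attach, monomial d.1 (c d)) := by
  rw [map_sum, eP]
  refine Finset.sum_congr rfl fun d _ => ?_
  rw [eval_monomial, Finsupp.prod_pow, mon]

lemma vanish_coeff {n k : ℕ} (c : ↥(expD n k) → ℝ)
    (h : ∀ y : Euc n, ‖y‖ ≤ 1/2 → eP n k c y = 0) : c = 0 := by
  have hp : (∑ d ∈ (expD n k).attach, monomial d.1 (c d)) = 0 :=
    mvpoly_zero_of_vanish _ (fun x hx => by rw [← eP_eq_eval]; exact h x hx)
  funext d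
  have h1 := congrArg (fun p => MvPolynomial.coeff d.1 p) hp
  simp only [MvPolynomial.coeff_sum, MvPolynomial.coeff_zero] at h1
  have h2 : ∑ d' ∈ (expD n k).attach, MvPolynomial.coeff d.1 (monomial d'.1 (c d')) = c d := by
    rw [Finset.sum_eq_single d]
    · rw [MvPolynomial.coeff_monomial, if_pos rfl]
    · intro b _ hb
      rw [MvPolynomial.coeff_monomial, if_neg (fun hh => hb (Subtype.ext hh))]
    · intro hd; exact absurd (Finset.mem_attach _ d) hd
  rw [h2] at h1
  simpa using h1

lemma coeff_bound (n k : ℕ) : ∃ C : ℝ, 0 ≤ C ∧ ∀ (c : ↥(expD n k) → ℝ) (m : ℝ), 0 ≤ m →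
    (∀ y : Euc n, ‖y‖ ≤ 1/2 → |eP n k c y| ≤ m) → ‖c‖ ≤ C * m := by
  classical
  haveI : CompactSpace ↥(closedBall (0 : Euc n) (1/2)) :=
    isCompact_iff_compactSpace.mp (isCompact_closedBall _ _)
  let ψ : (↥(expD n k) → ℝ) →ₗ[ℝ] C(↥(closedBall (0 : Euc n) (1/2)), ℝ) :=
    { toFun := fun c => ⟨fun y => eP n k c y.1,
        (contDiff_eP c).continuous.comp continuous_subtype_val⟩
      map_add' := by
        intro c c'
        ext y
        simp [eP, add_mul, Finset.sum_add_distrib]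
      map_smul' := by
        intro a c
        ext y
        simp [eP, Finset.mul_sum, mul_assoc] }
  have hinj : Function.Injective ψ := by
    intro c c' hcc
    have h0 : ψ (c - c') = 0 := by rw [map_sub, hcc, sub_self]
    have hv : ∀ y : Euc n, ‖y‖ ≤ 1/2 → eP n k (c - c') y = 0 := by
      intro y hy
      have hy' : y ∈ closedBall (0 : Euc n) (1/2) := by
        rwa [mem_closedBall, dist_zero_right]
      have h5 := DFunLike.congr_fun h0 (⟨y, hy'⟩ : ↥(closedBall (0:Euc n) (1/2)))
      have h6 : eP n k (c - c') y = eP n k c y - eP n k c' y := by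
        simp [eP, sub_mul, Finset.sum_sub_distrib]
      rw [h6]
      rw [← h6]; exact h5
    have := vanish_coeff (c - c') hv
    exact sub_eq_zero.mp this
  let eqv := LinearEquiv.ofInjective ψ hinj
  haveI : FiniteDimensional ℝ ↥(LinearMap.range ψ) := LinearMap.finiteDimensional_range ψ
  let g := LinearMap.toContinuousLinearMap (eqv.symm.toLinearMap)
  obtain ⟨Cg, hCg0, hCg⟩ := ContinuousLinearMap.bound (𝕜 := ℝ) (E := ↥(LinearMap.range ψ)) (F := ↥(expD n k) → ℝ) g
  refine ⟨Cg, hCg0.le, fun c m hm hbd => ?_⟩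
  have h1 : ‖ψ c‖ ≤ m := by
    rw [ContinuousMap.norm_le _ hm]
    intro y
    have hy : ‖y.1‖ ≤ 1/2 := by
      have := y.2
      rwa [mem_closedBall, dist_zero_right] at this
    exact hbd y.1 hy
  have h2 : c = g ⟨ψ c, LinearMap.mem_range_self ψ c⟩ := by
    have h3 : eqv c = ⟨ψ c, LinearMap.mem_range_self ψ c⟩ := by
      apply Subtype.ext
      rfl
    rw [show g ⟨ψ c, LinearMap.mem_range_self ψ c⟩ = eqv.symm ⟨ψ c, _⟩ from rfl, ← h3,
      LinearEquiv.symm_apply_apply]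
  calc ‖c‖ = ‖g ⟨ψ c, LinearMap.mem_range_self ψ c⟩‖ := by rw [← h2]
    _ ≤ Cg * ‖(⟨ψ c, LinearMap.mem_range_self ψ c⟩ : ↥(LinearMap.range ψ))‖ := hCg _
    _ ≤ Cg * m := by
        have h4 : ‖(⟨ψ c, LinearMap.mem_range_self ψ c⟩ : ↥(LinearMap.range ψ))‖ = ‖ψ c‖ := rfl
        rw [h4]
        exact mul_le_mul_of_nonneg_left h1 hCg0.le

lemma nat_lt_top' (i : ℕ) : (i : WithTop ℕ∞) < ((⊤:ℕ∞) : WithTop ℕ∞) := by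
  refine lt_of_lt_of_le ?_ le_rfl
  exact_mod_cast WithTop.coe_lt_coe.mpr (ENat.coe_lt_top i)

lemma nat_le_top' (i : ℕ) : (i : WithTop ℕ∞) ≤ ((⊤:ℕ∞) : WithTop ℕ∞) := (nat_lt_top' i).le

lemma deriv_bound (n k : ℕ) : ∃ C : ℝ, 0 ≤ C ∧ ∀ i, i ≤ k → ∀ (c : ↥(expD n k) → ℝ),
    ∀ y : Euc n, ‖y‖ ≤ 2 → ‖iteratedFDeriv ℝ i (eP n k c) y‖ ≤ C * ‖c‖ := by
  classical
  have hB : ∀ (i : ℕ) (d : ↥(expD n k)), ∃ B : ℝ, 0 ≤ B ∧ ∀ y : Euc n, ‖y‖ ≤ 2 →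
      ‖iteratedFDeriv ℝ i (mon n d.1) y‖ ≤ B := by
    intro i d
    obtain ⟨B, hBb⟩ := (isCompact_closedBall (0:Euc n) 2).exists_bound_of_continuousOn
      ((contDiff_mon d.1).continuous_iteratedFDeriv (nat_le_top' i)).continuousOn
    refine ⟨max B 0, le_max_right _ _, fun y hy => ?_⟩
    have hy' : y ∈ closedBall (0:Euc n) 2 := by rwa [mem_closedBall, dist_zero_right]
    exact le_trans (hBb y hy') (le_max_left _ _)
  choose B hB0 hBb using hB
  refine ⟨∑ i ∈ Finset.range (k+1), ∑ d ∈ (expD n k).attach, B i d,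
    Finset.sum_nonneg fun i _ => Finset.sum_nonneg fun d _ => hB0 i d, fun i hi c y hy => ?_⟩
  have heP : eP n k c = fun x => ∑ d ∈ (expD n k).attach, c d • mon n d.1 x := by
    funext x; simp [eP, smul_eq_mul]
  rw [heP]
  rw [iteratedFDeriv_sum (fun d _ => ((contDiff_mon d.1).of_le (nat_le_top' i)).const_smul (c d))]
  simp only [Finset.sum_apply]
  refine le_trans (norm_sum_le _ _) ?_
  have hstep : ∀ d ∈ (expD n k).attach,
      ‖iteratedFDeriv ℝ i (fun x => c d • mon n d.1 x) y‖ ≤ B i d * ‖c‖ := by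
    intro d _
    rw [iteratedFDeriv_const_smul_apply' ((contDiff_mon d.1).of_le (nat_le_top' i)).contDiffAt]
    rw [norm_smul]
    have h1 : ‖c d‖ ≤ ‖c‖ := norm_le_pi_norm c d
    have h2 : ‖iteratedFDeriv ℝ i (mon n d.1) y‖ ≤ B i d := hBb i d y hy
    calc ‖c d‖ * ‖iteratedFDeriv ℝ i (mon n d.1) y‖ ≤ ‖c‖ * B i d :=
          mul_le_mul h1 h2 (norm_nonneg _) (norm_nonneg _)
      _ = B i d * ‖c‖ := mul_comm _ _
  refine le_trans (Finset.sum_le_sum hstep) ?_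
  rw [← Finset.sum_mul]
  refine mul_le_mul_of_nonneg_right ?_ (norm_nonneg c)
  exact Finset.single_le_sum (f := fun i => ∑ d ∈ (expD n k).attach, B i d)
    (fun j _ => Finset.sum_nonneg fun d _ => hB0 j d) (Finset.mem_range.mpr (Nat.lt_succ_of_le hi))

lemma itd_translate {n : ℕ} (f : Euc n → ℝ) (hf : ContDiff ℝ (⊤:ℕ∞) f) (b : Euc n) :
    ∀ (i : ℕ) (x : Euc n),
      iteratedFDeriv ℝ i (fun w => f (w + b)) x = iteratedFDeriv ℝ i f (x + b) := by
  intro i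
  induction i with
  | zero => intro x; ext m; simp
  | succ i ih =>
    intro x
    rw [iteratedFDeriv_succ_eq_comp_left, iteratedFDeriv_succ_eq_comp_left]
    simp only [Function.comp_apply]
    congr 1
    have hfun : iteratedFDeriv ℝ i (fun w => f (w + b))
        = fun y => iteratedFDeriv ℝ i f (y + b) := funext ih
    rw [hfun]
    have hdiff : Differentiable ℝ (iteratedFDeriv ℝ i f) :=
      hf.differentiable_iteratedFDeriv (nat_lt_top' i)
    have h3 : HasFDerivAt (fun y : Euc n => y + b) (ContinuousLinearMap.id ℝ (Euc n)) x :=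
      (hasFDerivAt_id x).add_const b
    have h1 : HasFDerivAt (fun y : Euc n => iteratedFDeriv ℝ i f (y + b))
        (fderiv ℝ (iteratedFDeriv ℝ i f) (x + b)) x := by
      have h2 := ((hdiff (x + b)).hasFDerivAt).comp x h3
      exact h2
    rw [h1.fderiv]

lemma norm_itd_affine {n : ℕ} (f : Euc n → ℝ) (hf : ContDiff ℝ (⊤:ℕ∞) f) (a : ℝ) (b : Euc n)
    (i : ℕ) (w : Euc n) :
    ‖iteratedFDeriv ℝ i (fun y => f (a • y + b)) w‖ ≤ |a| ^ i * ‖iteratedFDeriv ℝ i f (a • w + b)‖ := by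
  set g : Euc n → ℝ := fun y => f (y + b) with hg
  have hgC : ContDiff ℝ (⊤:ℕ∞) g :=
    hf.comp (contDiff_id.add contDiff_const)
  set L : Euc n →L[ℝ] Euc n := a • ContinuousLinearMap.id ℝ (Euc n) with hL
  have hfeq : (fun y => f (a • y + b)) = g ∘ L := by
    funext y; simp [hg, hL]
  rw [hfeq, ContinuousLinearMap.iteratedFDeriv_comp_right L hgC w (nat_le_top' i)]
  refine le_trans (ContinuousMultilinearMap.norm_compContinuousLinearMap_le _ _) ?_
  have hLnorm : ‖L‖ ≤ |a| := by
    refine ContinuousLinearMap.opNorm_le_bound _ (abs_nonneg a) fun x => ?_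
    have : L x = a • x := by simp [hL]
    rw [this, norm_smul]
    exact le_of_eq rfl
  have hgit : ‖iteratedFDeriv ℝ i g (L w)‖ = ‖iteratedFDeriv ℝ i f (a • w + b)‖ := by
    rw [hg, itd_translate f hf b i (L w)]
    have : L w = a • w := by simp [hL]
    rw [this]
  calc ‖iteratedFDeriv ℝ i g (L w)‖ * ∏ _j : Fin i, ‖L‖
      ≤ ‖iteratedFDeriv ℝ i g (L w)‖ * ∏ _j : Fin i, |a| := by
        refine mul_le_mul_of_nonneg_left ?_ (norm_nonneg _)
        exact Finset.prod_le_prod (fun _ _ => norm_nonneg L) (fun _ _ => hLnorm)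
    _ = |a| ^ i * ‖iteratedFDeriv ℝ i f (a • w + b)‖ := by
        rw [hgit, Finset.prod_const, mul_comm]
        simp

lemma totalDegree_bind₁_le {n : ℕ} (g : Fin n → MvPolynomial (Fin n) ℝ)
    (hg : ∀ i, (g i).totalDegree ≤ 1) (q : MvPolynomial (Fin n) ℝ) :
    (MvPolynomial.bind₁ g q).totalDegree ≤ q.totalDegree := by
  classical
  have hrepr := q.support_sum_monomial_coeff
  have hstep : (MvPolynomial.bind₁ g q).totalDegree =
      (∑ d ∈ q.support, MvPolynomial.bind₁ g (monomial d (q.coeff d))).totalDegree := by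
    rw [← map_sum, hrepr]
  rw [hstep]
  refine le_trans (MvPolynomial.totalDegree_finset_sum _ _) ?_
  refine Finset.sup_le fun d hd => ?_
  rw [MvPolynomial.bind₁_monomial]
  refine le_trans (MvPolynomial.totalDegree_mul _ _) ?_
  rw [MvPolynomial.totalDegree_C, zero_add]
  refine le_trans (MvPolynomial.totalDegree_finset_prod _ _) ?_
  have h1 : ∀ j ∈ d.support, ((g j) ^ (d j)).totalDegree ≤ d j := fun j _ =>
    le_trans (MvPolynomial.totalDegree_pow _ _) (by
      calc d j * (g j).totalDegree ≤ d j * 1 := Nat.mul_le_mul_left _ (hg j)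
        _ = d j := Nat.mul_one _)
  refine le_trans (Finset.sum_le_sum h1) ?_
  exact MvPolynomial.le_totalDegree hd

lemma aeval_eq_eval' {n : ℕ} (f : Fin n → ℝ) (p : MvPolynomial (Fin n) ℝ) :
    MvPolynomial.aeval f p = eval f p := by
  rw [MvPolynomial.aeval_eq_eval₂Hom, Algebra.algebraMap_self]; rfl

lemma scaled_poly {n k : ℕ} (q : MvPolynomial (Fin n) ℝ) (hdeg : q.totalDegree ≤ k)
    (z : Euc n) (r : ℝ) :
    IsPolyDeg n k (fun y : Euc n => eval (fun i => z i + r * y i) q) := by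
  refine ⟨MvPolynomial.bind₁ (fun i => MvPolynomial.C (z i) + MvPolynomial.C r * MvPolynomial.X i) q,
    ?_, ?_⟩
  · refine le_trans (totalDegree_bind₁_le _ (fun i => ?_) q) hdeg
    refine le_trans (MvPolynomial.totalDegree_add _ _) ?_
    simp only [MvPolynomial.totalDegree_C, max_le_iff]
    constructor
    · exact Nat.zero_le 1
    · refine le_trans (MvPolynomial.totalDegree_mul _ _) ?_
      simp [MvPolynomial.totalDegree_C, MvPolynomial.totalDegree_X]
  · intro y
    have h1 := MvPolynomial.aeval_bind₁ (fun i : Fin n => (y i : ℝ))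
      (fun i => MvPolynomial.C (z i) + MvPolynomial.C r * MvPolynomial.X i) q
    rw [aeval_eq_eval', aeval_eq_eval'] at h1
    rw [h1]
    exact congrArg (fun v => eval v q) (funext fun i => by
      simp only [map_add, map_mul, MvPolynomial.aeval_C, MvPolynomial.aeval_X,
        Algebra.algebraMap_self_apply])

/-- If `f ∈ L^∞(B₁)` admits at each `x₀ ∈ B₁` a degree-`k` polynomial `P x₀` with
`sup_{B_r(x₀)∩B₁} |f - P x₀| ≤ K r^{k+α}` for all `0 < r < 1`, then for `x, x₀ ∈ B₁` with
`r = |x-x₀| < 1/4`, `Σ_{i≤k} r^i sup_{B_r(x₀)∩B₁} |D^i P_x - D^i P_{x₀}| ≤ C K r^{k+α}`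
with `C = C(n,k)`. -/
theorem poly_approx_comparison (n k : ℕ) :
    ∃ C > 0, ∀ α : ℝ, 0 < α → α ≤ 1 → ∀ (f : Euc n → ℝ) (M : ℝ), (∀ x, |f x| ≤ M) →
      ∀ (K : ℝ) (P : Euc n → Euc n → ℝ),
      (∀ x₀ ∈ ball (0 : Euc n) 1, IsPolyDeg n k (P x₀) ∧
        ∀ r : ℝ, 0 < r → r < 1 →
          (⨆ y ∈ ball x₀ r ∩ ball (0 : Euc n) 1, |f y - P x₀ y|) ≤ K * r ^ ((k : ℝ) + α)) →
      ∀ x₀ ∈ ball (0 : Euc n) 1, ∀ x ∈ ball (0 : Euc n) 1, dist x x₀ < 1 / 4 →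
        (∑ i ∈ Finset.range (k + 1), dist x x₀ ^ i *
            ⨆ y ∈ ball x₀ (dist x x₀) ∩ ball (0 : Euc n) 1,
              ‖iteratedFDeriv ℝ i (P x) y - iteratedFDeriv ℝ i (P x₀) y‖) ≤
          C * K * dist x x₀ ^ ((k : ℝ) + α) := by
  obtain ⟨C₁, hC₁0, hC₁⟩ := coeff_bound n k
  obtain ⟨C₂, hC₂0, hC₂⟩ := deriv_bound n k
  set c₃ : ℝ := 1 + 2 ^ (k+1) with hc₃
  have hc₃0 : 0 < c₃ := by positivity
  set A : ℝ := C₂ * (C₁ * c₃) with hA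
  have hA0 : 0 ≤ A := by positivity
  refine ⟨(k+1) * A + 1, by positivity, ?_⟩
  intro α hα0 hα1 f M hfM K P hP x₀ hx₀ x hx hdist
  set s : ℝ := (k : ℝ) + α with hs
  have hs0 : 0 < s := by positivity
  set r : ℝ := dist x x₀ with hrdef
  have hr0 : (0:ℝ) ≤ r := dist_nonneg
  rcases eq_or_lt_of_le hr0 with hr | hr
  · -- r = 0
    have hr' : r = 0 := hr.symm
    have hball : ball x₀ r ∩ ball (0 : Euc n) 1 = ∅ := by
      rw [hr', Metric.ball_zero, Set.empty_inter]
    have hzero : ∀ i ∈ Finset.range (k+1), r ^ i *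
        (⨆ y ∈ ball x₀ r ∩ ball (0:Euc n) 1,
          ‖iteratedFDeriv ℝ i (P x) y - iteratedFDeriv ℝ i (P x₀) y‖) = 0 := by
      intro i _
      have : (⨆ y ∈ ball x₀ r ∩ ball (0:Euc n) 1,
          ‖iteratedFDeriv ℝ i (P x) y - iteratedFDeriv ℝ i (P x₀) y‖) = 0 := by
        rw [hball]
        simp
      rw [this, mul_zero]
    rw [Finset.sum_congr rfl hzero, Finset.sum_const, smul_zero]
    rw [hr', Real.zero_rpow (ne_of_gt hs0), mul_zero]
  · -- 0 < r
    have hr4 : r < 1/4 := hdist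
    have hr1 : r < 1 := by linarith
    have hx₀1 : ‖x₀‖ < 1 := by rwa [← mem_ball_zero_iff]
    have hrpow : 0 < r ^ s := Real.rpow_pos_of_pos hr _
    -- K ≥ 0
    have hK : 0 ≤ K := by
      have hsup := (hP x₀ hx₀).2 r hr hr1
      have hsupnn : 0 ≤ ⨆ y ∈ ball x₀ r ∩ ball (0:Euc n) 1, |f y - P x₀ y| :=
        Real.iSup_nonneg fun y => Real.iSup_nonneg fun _ => abs_nonneg _
      by_contra hneg
      push_neg at hneg
      have : K * r ^ s < 0 := mul_neg_of_neg_of_pos hneg hrpow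
      linarith [le_trans hsupnn hsup]
    obtain ⟨hpolyx, hboundx⟩ := hP x hx
    obtain ⟨hpolyx₀, hboundx₀⟩ := hP x₀ hx₀
    obtain ⟨q1, hq1d, hq1⟩ := hpolyx
    obtain ⟨q2, hq2d, hq2⟩ := hpolyx₀
    obtain ⟨c1, hc1⟩ := rep_of_isPolyDeg (F := P x) ⟨q1, hq1d, hq1⟩
    obtain ⟨c2, hc2⟩ := rep_of_isPolyDeg (F := P x₀) ⟨q2, hq2d, hq2⟩
    have hCDx : ContDiff ℝ (⊤:ℕ∞) (P x) := hc1 ▸ contDiff_eP c1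
    have hCDx₀ : ContDiff ℝ (⊤:ℕ∞) (P x₀) := hc2 ▸ contDiff_eP c2
    set q : MvPolynomial (Fin n) ℝ := q1 - q2 with hq
    have hqd : q.totalDegree ≤ k := by
      rw [hq, sub_eq_add_neg]
      refine le_trans (MvPolynomial.totalDegree_add _ _) (max_le hq1d ?_)
      rw [show -q2 = (-1 : ℝ) • q2 by rw [neg_one_smul]]
      exact le_trans (MvPolynomial.totalDegree_smul_le _ _) hq2d
    have hQ : ∀ w : Euc n, P x w - P x₀ w = eval (fun i => w i) q := by
      intro w
      rw [hq1, hq2, hq, map_sub]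
    set z : Euc n := (1 - r/2) • x₀ with hz
    have hzx₀ : dist z x₀ = (r/2) * ‖x₀‖ := by
      rw [dist_eq_norm]
      have h1 : z - x₀ = (-(r/2)) • x₀ := by
        rw [hz]; module
      rw [h1, norm_smul, Real.norm_eq_abs, abs_neg,
        abs_of_pos (by linarith : (0:ℝ) < r/2)]
    have hznorm : ‖z‖ ≤ (1 - r/2) * ‖x₀‖ := by
      rw [hz, norm_smul]
      have h2 : |1 - r/2| = 1 - r/2 := abs_of_pos (by linarith)
      rw [Real.norm_eq_abs, h2]
    have hball1 : closedBall z (r/2) ⊆ ball x₀ r ∩ ball (0:Euc n) 1 := by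
      intro w hw
      rw [mem_closedBall] at hw
      have hwz : dist w z ≤ r/2 := hw
      constructor
      · rw [mem_ball]
        have h2 : dist w x₀ ≤ dist w z + dist z x₀ := dist_triangle _ _ _
        have h3 : (r/2) * ‖x₀‖ < r/2 := by
          have := mul_lt_mul_of_pos_left hx₀1 (show (0:ℝ) < r/2 by linarith)
          linarith [this]
        rw [hzx₀] at h2
        linarith
      · rw [mem_ball_zero_iff]
        have h4 : ‖w‖ ≤ ‖z‖ + dist w z := by
          rw [dist_eq_norm]
          calc ‖w‖ = ‖z + (w - z)‖ := by rw [show z + (w - z) = w by abel]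
            _ ≤ ‖z‖ + ‖w - z‖ := norm_add_le _ _
        have h5 : (1 - r/2) * ‖x₀‖ < 1 - r/2 := by
          have := mul_lt_mul_of_pos_left hx₀1 (show (0:ℝ) < 1 - r/2 by linarith)
          linarith [this]
        linarith
    have hball2 : ∀ w ∈ ball x₀ r ∩ ball (0:Euc n) 1, ‖r⁻¹ • (w - z)‖ ≤ 2 := by
      intro w hw
      have h1 : dist w x₀ < r := mem_ball.mp hw.1
      have h2 : ‖w - z‖ ≤ dist w x₀ + dist x₀ z := by
        rw [dist_eq_norm, dist_eq_norm]
        calc ‖w - z‖ = ‖(w - x₀) + (x₀ - z)‖ := by rw [show (w - x₀) + (x₀ - z) = w - z by abel]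
          _ ≤ ‖w - x₀‖ + ‖x₀ - z‖ := norm_add_le _ _
      rw [dist_comm x₀ z, hzx₀] at h2
      have h3 : ‖w - z‖ ≤ 3*r/2 := by
        have h25 : (r/2) * ‖x₀‖ ≤ r/2 := by
          have := mul_le_mul_of_nonneg_left (le_of_lt hx₀1) (show (0:ℝ) ≤ r/2 by linarith)
          linarith [this]
        linarith
      rw [norm_smul, Real.norm_eq_abs]
      have h4 : |r⁻¹| = r⁻¹ := abs_of_pos (by positivity)
      rw [h4]
      calc r⁻¹ * ‖w - z‖ ≤ r⁻¹ * (3*r/2) :=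
            mul_le_mul_of_nonneg_left h3 (by positivity)
        _ = 3/2 := by field_simp
        _ ≤ 2 := by norm_num
    -- pointwise extraction
    have hptgen : ∀ (x' : Euc n) (cB : ↥(expD n k) → ℝ), P x' = eP n k cB → ∀ (ρ : ℝ),
        ∀ w ∈ ball x' ρ ∩ ball (0:Euc n) 1,
        |f w - P x' w| ≤ ⨆ y ∈ ball x' ρ ∩ ball (0:Euc n) 1, |f y - P x' y| := by
      intro x' cB hrep ρ w hw
      obtain ⟨M', hM'⟩ := (isCompact_closedBall (0:Euc n) 1).exists_bound_of_continuousOn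
        (contDiff_eP cB).continuous.continuousOn
      have hgb : ∀ y, y ∈ ball x' ρ ∩ ball (0:Euc n) 1 → |f y - P x' y| ≤ max (M + M') 0 := by
        intro y hy
        have hy1 : y ∈ closedBall (0:Euc n) 1 := ball_subset_closedBall hy.2
        refine le_trans (le_trans (abs_sub _ _) ?_) (le_max_left _ _)
        have := hM' y hy1
        rw [hrep]
        exact add_le_add (hfM y) (by simpa using this)
      have hb : BddAbove (Set.range fun y =>
          ⨆ _ : y ∈ ball x' ρ ∩ ball (0:Euc n) 1, |f y - P x' y|) := by
        refine ⟨max (M + M') 0, ?_⟩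
        rintro v ⟨y, rfl⟩
        exact Real.iSup_le (fun hy => hgb y hy) (le_max_right _ _)
      calc |f w - P x' w|
          = ⨆ _ : w ∈ ball x' ρ ∩ ball (0:Euc n) 1, |f w - P x' w| := by rw [ciSup_pos hw]
        _ ≤ ⨆ y, ⨆ _ : y ∈ ball x' ρ ∩ ball (0:Euc n) 1, |f y - P x' y| := le_ciSup hb w
    have hptx₀ : ∀ w ∈ ball x₀ r ∩ ball (0:Euc n) 1, |f w - P x₀ w| ≤ K * r ^ s := by
      intro w hw
      exact le_trans (hptgen x₀ c2 hc2 r w hw) ((hP x₀ hx₀).2 r hr hr1)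
    have hptx : ∀ w ∈ ball x (2*r) ∩ ball (0:Euc n) 1, |f w - P x w| ≤ K * (2*r) ^ s := by
      intro w hw
      exact le_trans (hptgen x c1 hc1 (2*r) w hw)
        ((hP x hx).2 (2*r) (by linarith) (by linarith))
    -- combined bound on Q
    have hQbound : ∀ w ∈ ball x₀ r ∩ ball (0:Euc n) 1,
        |P x w - P x₀ w| ≤ c₃ * (K * r ^ s) := by
      intro w hw
      have hw2 : w ∈ ball x (2*r) ∩ ball (0:Euc n) 1 := by
        refine ⟨?_, hw.2⟩
        rw [mem_ball]
        have h1 : dist w x₀ < r := mem_ball.mp hw.1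
        calc dist w x ≤ dist w x₀ + dist x₀ x := dist_triangle _ _ _
          _ < r + r := by rw [dist_comm x₀ x, ← hrdef]; linarith
          _ = 2*r := by ring
      have h2 : |P x w - P x₀ w| ≤ |f w - P x₀ w| + |f w - P x w| := by
        have : P x w - P x₀ w = (f w - P x₀ w) - (f w - P x w) := by ring
        rw [this]
        exact abs_sub _ _
      have h3 : (2*r) ^ s = 2 ^ s * r ^ s := Real.mul_rpow (by norm_num) (le_of_lt hr)
      have h4 : (2:ℝ) ^ s ≤ 2 ^ ((k:ℝ)+1) :=
        Real.rpow_le_rpow_of_exponent_le one_le_two (by rw [hs]; linarith)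
      have h5 : (2:ℝ) ^ ((k:ℝ)+1) = 2 ^ (k+1) := by
        rw [show ((k:ℝ)+1) = ((k+1 : ℕ) : ℝ) by push_cast; ring, Real.rpow_natCast]
      have h6 : K * (2*r) ^ s ≤ K * (2 ^ (k+1) * r ^ s) := by
        refine mul_le_mul_of_nonneg_left ?_ hK
        rw [h3]
        refine mul_le_mul_of_nonneg_right ?_ (le_of_lt hrpow)
        rw [← h5]; exact h4
      have h7 := hptx₀ w hw
      have h8 := hptx w hw2
      have h9 : |f w - P x₀ w| + |f w - P x w| ≤ K * r^s + K * (2^(k+1) * r^s) := by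
        exact add_le_add h7 (le_trans h8 h6)
      calc |P x w - P x₀ w| ≤ K * r^s + K * (2^(k+1) * r^s) := le_trans h2 h9
        _ = c₃ * (K * r^s) := by rw [hc₃]; ring
    -- scaled polynomial
    obtain ⟨c, hc⟩ := rep_of_isPolyDeg (scaled_poly q hqd z r)
    have hchar : ∀ y : Euc n, eP n k c y = P x (z + r • y) - P x₀ (z + r • y) := by
      intro y
      rw [← hc]
      rw [hQ (z + r • y)]
      exact congrArg (fun v => eval v q) (funext fun i => by
        simp [PiLp.add_apply, PiLp.smul_apply, smul_eq_mul])
    have hsmall : ∀ y : Euc n, ‖y‖ ≤ 1/2 → |eP n k c y| ≤ c₃ * (K * r ^ s) := by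
      intro y hy
      rw [hchar y]
      refine hQbound _ (hball1 ?_)
      rw [mem_closedBall, dist_eq_norm]
      have : z + r • y - z = r • y := by abel
      rw [this, norm_smul, Real.norm_eq_abs, abs_of_pos hr]
      calc r * ‖y‖ ≤ r * (1/2) := mul_le_mul_of_nonneg_left hy (le_of_lt hr)
        _ = r/2 := by ring
    have hcoef : ‖c‖ ≤ C₁ * (c₃ * (K * r ^ s)) :=
      hC₁ c _ (by positivity) hsmall
    -- derivative bound on Q
    have hQeq : (fun w' => P x w' - P x₀ w')
        = fun w' => eP n k c (r⁻¹ • w' + (-r⁻¹) • z) := by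
      funext w'
      rw [hchar (r⁻¹ • w' + (-r⁻¹) • z)]
      have : z + r • (r⁻¹ • w' + (-r⁻¹) • z) = w' := by
        rw [smul_add, smul_smul, smul_smul, mul_inv_cancel₀ (ne_of_gt hr), one_smul]
        have hrr : r * -r⁻¹ = -1 := by field_simp
        rw [hrr, neg_one_smul]
        abel
      rw [this]
    have hQder : ∀ i, i ≤ k → ∀ w ∈ ball x₀ r ∩ ball (0:Euc n) 1,
        ‖iteratedFDeriv ℝ i (fun w' => P x w' - P x₀ w') w‖ ≤ (r⁻¹)^i * (C₂ * ‖c‖) := by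
      intro i hi w hw
      rw [hQeq]
      refine le_trans (norm_itd_affine (eP n k c) (contDiff_eP c) r⁻¹ ((-r⁻¹) • z) i w) ?_
      have habs : |r⁻¹| = r⁻¹ := abs_of_pos (by positivity)
      rw [habs]
      refine mul_le_mul_of_nonneg_left ?_ (by positivity)
      have hpt : r⁻¹ • w + (-r⁻¹) • z = r⁻¹ • (w - z) := by
        rw [smul_sub, neg_smul]
        abel
      rw [hpt]
      exact hC₂ i hi c _ (hball2 w hw)
    -- rewrite the difference of derivatives
    have hdiffeq : ∀ (i : ℕ) (y : Euc n),
        iteratedFDeriv ℝ i (P x) y - iteratedFDeriv ℝ i (P x₀) y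
          = iteratedFDeriv ℝ i (fun w' => P x w' - P x₀ w') y := by
      intro i y
      have h1 : (fun w' => P x w' - P x₀ w') = P x + (-(P x₀)) := by
        funext w'; simp [sub_eq_add_neg]
      have hgneg : ContDiff ℝ (i : WithTop ℕ∞) (-(P x₀)) := (hCDx₀.of_le (nat_le_top' i)).neg
      rw [h1, iteratedFDeriv_add_apply (hCDx.of_le (nat_le_top' i)).contDiffAt hgneg.contDiffAt,
        iteratedFDeriv_neg_apply, sub_eq_add_neg]
    -- per-term bound
    have hterm : ∀ i ∈ Finset.range (k+1), r ^ i *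
        (⨆ y ∈ ball x₀ r ∩ ball (0:Euc n) 1,
          ‖iteratedFDeriv ℝ i (P x) y - iteratedFDeriv ℝ i (P x₀) y‖)
        ≤ A * (K * r ^ s) := by
      intro i hi
      have hik : i ≤ k := Nat.lt_succ_iff.mp (Finset.mem_range.mp hi)
      have hsupb : (⨆ y ∈ ball x₀ r ∩ ball (0:Euc n) 1,
          ‖iteratedFDeriv ℝ i (P x) y - iteratedFDeriv ℝ i (P x₀) y‖)
          ≤ (r⁻¹)^i * (C₂ * ‖c‖) := by
        have hnn : 0 ≤ (r⁻¹)^i * (C₂ * ‖c‖) :=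
          mul_nonneg (pow_nonneg (inv_nonneg.mpr hr0) i) (mul_nonneg hC₂0 (norm_nonneg c))
        refine Real.iSup_le (fun y => Real.iSup_le (fun hy => ?_) hnn) hnn
        rw [hdiffeq i y]
        exact hQder i hik y hy
      calc r ^ i * (⨆ y ∈ ball x₀ r ∩ ball (0:Euc n) 1,
            ‖iteratedFDeriv ℝ i (P x) y - iteratedFDeriv ℝ i (P x₀) y‖)
          ≤ r ^ i * ((r⁻¹)^i * (C₂ * ‖c‖)) :=
            mul_le_mul_of_nonneg_left hsupb (pow_nonneg hr0 i)
        _ = (r * r⁻¹)^i * (C₂ * ‖c‖) := by rw [mul_pow]; ring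
        _ = C₂ * ‖c‖ := by rw [mul_inv_cancel₀ (ne_of_gt hr), one_pow, one_mul]
        _ ≤ C₂ * (C₁ * (c₃ * (K * r ^ s))) := mul_le_mul_of_nonneg_left hcoef hC₂0
        _ = A * (K * r ^ s) := by rw [hA]; ring
    calc (∑ i ∈ Finset.range (k + 1), r ^ i *
            ⨆ y ∈ ball x₀ r ∩ ball (0 : Euc n) 1,
              ‖iteratedFDeriv ℝ i (P x) y - iteratedFDeriv ℝ i (P x₀) y‖)
        ≤ ∑ _i ∈ Finset.range (k+1), A * (K * r ^ s) := Finset.sum_le_sum hterm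
      _ = (k+1) * (A * (K * r ^ s)) := by
          rw [Finset.sum_const, Finset.card_range, nsmul_eq_mul]
          push_cast; ring
      _ ≤ ((k+1) * A + 1) * K * r ^ s := by
          have hKr : 0 ≤ K * r ^ s := mul_nonneg hK (le_of_lt hrpow)
          calc ((k:ℝ)+1) * (A * (K * r ^ s)) = ((k+1) * A) * (K * r ^ s) := by ring
            _ ≤ ((k+1) * A) * (K * r ^ s) + K * r ^ s := le_add_of_nonneg_right hKr
            _ = ((k+1) * A + 1) * K * r ^ s := by ring
end
end

section
/- Let E ⊂ ℝ^n be a closed set, k ≥ 1, 0 < α ≤ 1, and f : E → ℝ. Suppose for each x ∈ E there is a polynomial P_x of degree ≤ k with P_x(x) = f(x) and |D^i P_x(x) - D^i P_y(x)| ≤ K |x - y|^{k+α-i} for all x, y ∈ E and 0 ≤ i ≤ k. Then for all x, y ∈ E, all z ∈ ℝ^n, and all 0 ≤ i ≤ k, |D^i P_x(z) - D^i P_y(z)| ≤ C K Σ_{l=0}^{k-i} |x-y|^{k+α-i-l} |x-z|^l, with C depending only on n and k. -/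
open MeasureTheory Metric

noncomputable section

namespace WhitneyAux


variable {E F : Type} [NormedAddCommGroup E] [NormedSpace ℝ E]
  [NormedAddCommGroup F] [NormedSpace ℝ F]

theorem hfps_of_le {f : E → F} {p : FormalMultilinearSeries ℝ E F} {x : E} {N M : ℕ}
    {r : ENNReal} (h : HasFiniteFPowerSeriesOnBall f p x N r) (hNM : N ≤ M) :
    HasFiniteFPowerSeriesOnBall f p x M r :=
  ⟨h.toHasFPowerSeriesOnBall, fun m hm => h.finite m (hNM.trans hm)⟩

theorem norm_itfd_itfd (f : E → F) :
    ∀ (i j : ℕ) (x : E), ‖iteratedFDeriv ℝ j (iteratedFDeriv ℝ i f) x‖ =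
      ‖iteratedFDeriv ℝ (i + j) f x‖ := by
  intro i
  induction i with
  | zero =>
    intro j x
    rw [iteratedFDeriv_zero_eq_comp,
      LinearIsometryEquiv.norm_iteratedFDeriv_comp_left, Nat.zero_add]
  | succ i IH =>
    intro j x
    rw [iteratedFDeriv_succ_eq_comp_left,
      LinearIsometryEquiv.norm_iteratedFDeriv_comp_left (𝕜 := ℝ)
        ((continuousMultilinearCurryLeftEquiv ℝ (fun _ : Fin (i + 1) => E) F).symm)
        (fderiv ℝ (iteratedFDeriv ℝ i f)) x j,
      norm_iteratedFDeriv_fderiv, IH (j + 1) x,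
      show i + (j + 1) = i + 1 + j by omega]

theorem hfps_iteratedFDeriv {f : E → F} {p : FormalMultilinearSeries ℝ E F} {x : E} {N : ℕ}
    (h : HasFiniteFPowerSeriesOnBall f p x N ⊤) (i : ℕ) :
    ∃ q : FormalMultilinearSeries ℝ E (ContinuousMultilinearMap ℝ (fun _ : Fin i => E) F),
      HasFiniteFPowerSeriesOnBall (iteratedFDeriv ℝ i f) q x (N - i) ⊤ := by
  induction i with
  | zero =>
    refine ⟨(((continuousMultilinearCurryFin0 ℝ E F).symm :
      F →L[ℝ] ContinuousMultilinearMap ℝ (fun _ : Fin 0 => E) F)).compFormalMultilinearSeries p,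
      ?_⟩
    rw [iteratedFDeriv_zero_eq_comp, Nat.sub_zero]
    exact (((continuousMultilinearCurryFin0 ℝ E F).symm :
      F →L[ℝ] ContinuousMultilinearMap ℝ (fun _ : Fin 0 => E) F)).comp_hasFiniteFPowerSeriesOnBall h
  | succ i IH =>
    obtain ⟨q, hq⟩ := IH
    refine ⟨(((continuousMultilinearCurryLeftEquiv ℝ (fun _ : Fin (i + 1) => E) F).symm :
      (E →L[ℝ] ContinuousMultilinearMap ℝ (fun _ : Fin i => E) F) →L[ℝ]
        ContinuousMultilinearMap ℝ (fun _ : Fin (i + 1) => E) F)).compFormalMultilinearSeries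
      q.derivSeries, ?_⟩
    rw [iteratedFDeriv_succ_eq_comp_left, show N - (i + 1) = N - i - 1 by omega]
    exact (((continuousMultilinearCurryLeftEquiv ℝ (fun _ : Fin (i + 1) => E) F).symm :
      (E →L[ℝ] ContinuousMultilinearMap ℝ (fun _ : Fin i => E) F) →L[ℝ]
        ContinuousMultilinearMap ℝ (fun _ : Fin (i + 1) => E) F)).comp_hasFiniteFPowerSeriesOnBall
      hq.fderiv'

theorem taylor_bound [CompleteSpace F] {g : E → F} {q : FormalMultilinearSeries ℝ E F} {x : E}
    {N : ℕ} (h : HasFiniteFPowerSeriesOnBall g q x N ⊤) (z : E) :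
    ‖g z‖ ≤ ∑ m ∈ Finset.range N,
      ((m.factorial : ℝ))⁻¹ * ‖iteratedFDeriv ℝ m g x‖ * ‖z - x‖ ^ m := by
  have hz : g z = ∑ m ∈ Finset.range N, q m (fun _ => z - x) := by
    have h1 : g (x + (z - x)) = q.sum (z - x) := h.sum (by simp)
    rw [add_sub_cancel] at h1
    rw [h1, q.sum_of_finite h.finite, FormalMultilinearSeries.partialSum]
  rw [hz]
  refine (norm_sum_le _ _).trans (Finset.sum_le_sum fun m _ => ?_)
  have h2 := h.toHasFPowerSeriesOnBall.factorial_smul (z - x) m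
  have h2' : q m (fun _ => z - x)
      = (m.factorial : ℝ)⁻¹ • ((iteratedFDeriv ℝ m g x) fun _ => z - x) := by
    rw [← h2, ← Nat.cast_smul_eq_nsmul ℝ, smul_smul,
      inv_mul_cancel₀ (by positivity), one_smul]
  have h4 : ‖iteratedFDeriv ℝ m g x (fun _ => z - x)‖
      ≤ ‖iteratedFDeriv ℝ m g x‖ * ‖z - x‖ ^ m := by
    refine ((iteratedFDeriv ℝ m g x).le_opNorm _).trans ?_
    have : (∏ _i : Fin m, ‖z - x‖) = ‖z - x‖ ^ m := by
      simp [Finset.prod_const]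
    rw [this]
  rw [h2', norm_smul, Real.norm_eq_abs, abs_of_nonneg (by positivity), mul_assoc]
  gcongr



variable {n : ℕ}

def monoMap (c : ℝ) (L : List (Fin n)) :
    ContinuousMultilinearMap ℝ (fun _ : Fin L.length => Euc n) ℝ :=
  c • (ContinuousMultilinearMap.mkPiAlgebraFin ℝ L.length ℝ).compContinuousLinearMap
    (fun j => EuclideanSpace.proj (L.get j))

theorem monoMap_diag (c : ℝ) (L : List (Fin n)) (y : Euc n) :
    monoMap c L (fun _ => y) = c * (L.map (fun i => y i)).prod := by
  simp only [monoMap, ContinuousMultilinearMap.smul_apply,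
    ContinuousMultilinearMap.compContinuousLinearMap_apply,
    ContinuousMultilinearMap.mkPiAlgebraFin_apply, smul_eq_mul]
  congr 1
  have h1 : L.map (fun i => y i) = List.ofFn (fun j => y (L.get j)) := by
    conv_lhs => rw [← List.ofFn_get L]
    rw [List.map_ofFn]
    rfl
  rw [h1]
  simp

def monoSeries (c : ℝ) (L : List (Fin n)) : FormalMultilinearSeries ℝ (Euc n) ℝ :=
  Function.update (0 : FormalMultilinearSeries ℝ (Euc n) ℝ) L.length (monoMap c L)

theorem hfps_mono (c : ℝ) (L : List (Fin n)) :
    HasFiniteFPowerSeriesOnBall (fun y : Euc n => c * (L.map (fun i => y i)).prod)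
      (monoSeries c L) 0 (L.length + 1) ⊤ := by
  have hfin : ∀ m, L.length + 1 ≤ m → monoSeries c L m = 0 := fun m hm =>
    Function.update_of_ne (by omega) _ _
  have h := (monoSeries c L).hasFiniteFPowerSeriesOnBall_of_finite hfin
  refine h.congr fun y _ => ?_
  have hsum : (monoSeries c L).sum y
      = ∑ m ∈ Finset.range (L.length + 1), monoSeries c L m (fun _ => y) := by
    rw [(monoSeries c L).sum_of_finite hfin, FormalMultilinearSeries.partialSum]
  rw [hsum, Finset.sum_eq_single_of_mem L.length (Finset.self_mem_range_succ _)
    (fun m _ hm => by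
      rw [show monoSeries c L m = 0 from Function.update_of_ne hm _ _]
      rfl)]
  rw [show monoSeries c L L.length = monoMap c L from Function.update_self _ _ _]
  exact monoMap_diag c L y

theorem hfps_monomial (k : ℕ) (c : ℝ) (σ : Fin n →₀ ℕ) (hσ : (σ.sum fun _ e => e) ≤ k) :
    ∃ p : FormalMultilinearSeries ℝ (Euc n) ℝ, HasFiniteFPowerSeriesOnBall
      (fun y : Euc n => c * σ.prod fun i e => y i ^ e) p 0 (k + 1) ⊤ := by
  classical
  set L : List (Fin n) := σ.toMultiset.toList with hL
  have hlen : L.length = σ.sum fun _ e => e := by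
    rw [hL, Multiset.length_toList, Finsupp.card_toMultiset]
    rfl
  have hfun : (fun y : Euc n => c * (L.map (fun i => y i)).prod)
      = fun y : Euc n => c * σ.prod fun i e => y i ^ e := by
    funext y
    congr 1
    have h1 : ((σ.toMultiset.map fun i => (y i : ℝ)).prod) = (L.map fun i => (y i : ℝ)).prod := by
      rw [← Multiset.prod_coe, ← Multiset.map_coe, hL, Multiset.coe_toList]
    rw [← h1, Finsupp.toMultiset_map, Finsupp.prod_toMultiset,
      Finsupp.prod_mapDomain_index (fun b => pow_zero b) (fun b e1 e2 => pow_add b e1 e2)]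
  have hle : L.length + 1 ≤ k + 1 := by rw [hlen]; omega
  refine ⟨monoSeries c L, hfps_of_le ?_ hle⟩
  rw [← hfun]
  exact hfps_mono c L

theorem hfps_sum {ι : Type*} (s : Finset ι) (g : ι → Euc n → ℝ) (k : ℕ)
    (hg : ∀ a ∈ s, ∃ p : FormalMultilinearSeries ℝ (Euc n) ℝ, HasFiniteFPowerSeriesOnBall (g a) p 0 (k + 1) ⊤) :
    ∃ p : FormalMultilinearSeries ℝ (Euc n) ℝ, HasFiniteFPowerSeriesOnBall (fun z => ∑ a ∈ s, g a z) p 0 (k + 1) ⊤ := by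
  classical
  induction s using Finset.cons_induction with
  | empty =>
    refine ⟨_, hfps_of_le hasFiniteFPowerSeriesOnBall_const (by omega)⟩
  | cons a s ha IH =>
    obtain ⟨p1, hp1⟩ := hg a (Finset.mem_cons_self a s)
    obtain ⟨p2, hp2⟩ := IH (fun b hb => hg b (Finset.mem_cons_of_mem hb))
    refine ⟨p1 + p2, ?_⟩
    have hadd := hp1.add hp2
    rw [Nat.max_self] at hadd
    have hfn : (g a + fun z => ∑ b ∈ s, g b z) = fun z => ∑ b ∈ Finset.cons a s ha, g b z := by
      funext z
      rw [Finset.sum_cons]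
      rfl
    rwa [hfn] at hadd

theorem hfps_poly {k : ℕ} {Q : Euc n → ℝ} (h : IsPolyDeg n k Q) (x : Euc n) :
    ∃ p : FormalMultilinearSeries ℝ (Euc n) ℝ, HasFiniteFPowerSeriesOnBall Q p x (k + 1) ⊤ := by
  obtain ⟨q, hdeg, hQ⟩ := h
  have hQ' : Q = fun z : Euc n => ∑ σ ∈ q.support, q.coeff σ * σ.prod fun i e => (z i) ^ e := by
    funext z
    rw [hQ z, MvPolynomial.eval_eq]
    rfl
  have h0 : ∃ p : FormalMultilinearSeries ℝ (Euc n) ℝ, HasFiniteFPowerSeriesOnBall Q p 0 (k + 1) ⊤ := by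
    rw [hQ']
    exact hfps_sum q.support _ k (fun σ hσ =>
      hfps_monomial k (q.coeff σ) σ ((MvPolynomial.le_totalDegree hσ).trans hdeg))
  obtain ⟨p, hp⟩ := h0
  have h2 := hp.changeOrigin (y := x) (by simp)
  rw [zero_add, ENNReal.top_sub_coe] at h2
  exact ⟨_, h2⟩


end WhitneyAux

open WhitneyAux

/-- Whitney compatibility propagated to all of `ℝ^n`: if the Whitney-type compatibility
conditions hold at the base points, then for all `x, y ∈ E`, `z ∈ ℝ^n`, `0 ≤ i ≤ k`,
`|D^i P_x(z) - D^i P_y(z)| ≤ C K Σ_{l=0}^{k-i} |x-y|^{k+α-i-l} |x-z|^l`, `C = C(n,k)`. -/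
theorem whitney_poly_comparison (n k : ℕ) (hk : 1 ≤ k) :
    ∃ C > 0, ∀ α : ℝ, 0 < α → α ≤ 1 → ∀ (E : Set (Euc n)), IsClosed E →
      ∀ (f : Euc n → ℝ) (K : ℝ) (P : Euc n → Euc n → ℝ),
      (∀ x ∈ E, IsPolyDeg n k (P x) ∧ P x x = f x) →
      (∀ x ∈ E, ∀ y ∈ E, ∀ i ≤ k,
        ‖iteratedFDeriv ℝ i (P x) x - iteratedFDeriv ℝ i (P y) x‖ ≤
          K * dist x y ^ ((k : ℝ) + α - i)) →
      ∀ x ∈ E, ∀ y ∈ E, ∀ z : Euc n, ∀ i ≤ k,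
        ‖iteratedFDeriv ℝ i (P x) z - iteratedFDeriv ℝ i (P y) z‖ ≤
          C * K * ∑ l ∈ Finset.range (k - i + 1),
            dist x y ^ ((k : ℝ) + α - i - l) * dist x z ^ (l : ℕ) := by
  refine ⟨1, one_pos, ?_⟩
  intro α hα hα1 E _hE f K P hP hcomp x hx y hy z i hik
  by_cases hxy : x = y
  · subst hxy
    simp only [sub_self, norm_zero]
    have hz0 : ∀ l ∈ Finset.range (k - i + 1),
        dist x x ^ ((k : ℝ) + α - i - l) * dist x z ^ (l : ℕ) = 0 := by
      intro l hl
      rw [Finset.mem_range] at hl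
      have hl' : (l : ℝ) + i ≤ k := by
        have : l + i ≤ k := by omega
        exact_mod_cast this
      rw [dist_self, Real.zero_rpow (by nlinarith), zero_mul]
    rw [Finset.sum_congr rfl hz0, Finset.sum_const_zero, mul_zero]
  · have hd : 0 < dist x y := dist_pos.mpr hxy
    have hK : 0 ≤ K := by
      have h0 := hcomp x hx y hy 0 (Nat.zero_le k)
      have hpos : 0 < dist x y ^ ((k : ℝ) + α - (0 : ℕ)) := Real.rpow_pos_of_pos hd _
      nlinarith [norm_nonneg (iteratedFDeriv ℝ 0 (P x) x - iteratedFDeriv ℝ 0 (P y) x)]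
    obtain ⟨hPx, -⟩ := hP x hx
    obtain ⟨hPy, -⟩ := hP y hy
    obtain ⟨px, hpx⟩ := hfps_poly hPx x
    obtain ⟨py, hpy⟩ := hfps_poly hPy x
    have hCx : ∀ m : ℕ, ContDiff ℝ m (P x) := by
      intro m
      have : AnalyticOnNhd ℝ (P x) Set.univ :=
        fun w _ => (hpx.cpolynomialAt_of_mem (by simp)).analyticAt
      exact this.contDiff
    have hCy : ∀ m : ℕ, ContDiff ℝ m (P y) := by
      intro m
      have : AnalyticOnNhd ℝ (P y) Set.univ :=
        fun w _ => (hpy.cpolynomialAt_of_mem (by simp)).analyticAt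
      exact this.contDiff
    have hsub := hpx.sub hpy
    rw [Nat.max_self] at hsub
    have hsubD : ∀ (m : ℕ) (w : Euc n), iteratedFDeriv ℝ m (P x - P y) w
        = iteratedFDeriv ℝ m (P x) w - iteratedFDeriv ℝ m (P y) w := by
      intro m w
      have hnegC : ContDiff ℝ m (-P y) := (hCy m).neg
      rw [sub_eq_add_neg (P x) (P y), iteratedFDeriv_add_apply (hCx m).contDiffAt hnegC.contDiffAt,
        iteratedFDeriv_neg_apply, ← sub_eq_add_neg]
    obtain ⟨qq, hqq⟩ := hfps_iteratedFDeriv hsub i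
    have hT := taylor_bound hqq z
    rw [show k + 1 - i = k - i + 1 by omega] at hT
    rw [← hsubD i z]
    refine hT.trans ?_
    rw [one_mul, Finset.mul_sum]
    refine Finset.sum_le_sum fun m hm => ?_
    rw [Finset.mem_range] at hm
    have him : i + m ≤ k := by omega
    have hbound := hcomp x hx y hy (i + m) him
    have hA : ‖iteratedFDeriv ℝ m (iteratedFDeriv ℝ i (P x - P y)) x‖
        = ‖iteratedFDeriv ℝ (i + m) (P x - P y) x‖ := norm_itfd_itfd _ i m x
    have he : ((k : ℝ) + α - ((i + m : ℕ) : ℝ)) = (k : ℝ) + α - (i : ℕ) - (m : ℕ) := by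
      push_cast; ring
    have h5 : ‖iteratedFDeriv ℝ m (iteratedFDeriv ℝ i (P x - P y)) x‖
        ≤ K * dist x y ^ ((k : ℝ) + α - (i : ℕ) - (m : ℕ)) := by
      rw [hA, hsubD, ← he]
      exact hbound
    have hzx : ‖z - x‖ = dist x z := by rw [dist_eq_norm, norm_sub_rev]
    have hfact : ((m.factorial : ℝ))⁻¹ ≤ 1 := by
      rw [inv_le_one_iff₀]
      right
      exact_mod_cast Nat.one_le_iff_ne_zero.mpr m.factorial_ne_zero
    rw [hzx]
    calc ((m.factorial : ℝ))⁻¹ * ‖iteratedFDeriv ℝ m (iteratedFDeriv ℝ i (P x - P y)) x‖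
          * dist x z ^ m
        ≤ 1 * (‖iteratedFDeriv ℝ m (iteratedFDeriv ℝ i (P x - P y)) x‖ * dist x z ^ m) := by
          rw [mul_assoc]
          exact mul_le_mul_of_nonneg_right hfact (by positivity)
      _ = ‖iteratedFDeriv ℝ m (iteratedFDeriv ℝ i (P x - P y)) x‖ * dist x z ^ m := one_mul _
      _ ≤ (K * dist x y ^ ((k : ℝ) + α - (i : ℕ) - (m : ℕ))) * dist x z ^ m :=
          mul_le_mul_of_nonneg_right h5 (by positivity)
      _ = K * (dist x y ^ ((k : ℝ) + α - (i : ℕ) - (m : ℕ)) * dist x z ^ m) := mul_assoc _ _ _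
end
end
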